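/- Let (F, δ) be a differential field of characteristic 0 such that for all x ∈ F and all positive integers n, δ(x) = n·x implies x = 0. Let F(t) be the rational function field with the derivation extending δ by δ(t) = 1. Then for all y ∈ F(t) and all positive integers n, δ(y) = n·y implies y = 0. -/
import Mathlib

open Polynomial

/-- The derivation on `F[X]` extending `δ` (coefficientwise) with `X ↦ 1`,
as a plain function. -/
noncomputable def DP {F : Type*} [Field F] (δ : Derivation ℤ F F) (p : F[X]) : F[X] :=
  derivative p + p.sum fun i a => monomial i (δ a)

lemma DP_coeff {F : Type*} [Field F] (δ : Derivation ℤ F F) (p : F[X]) (j : ℕ) :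
    (DP δ p).coeff j = p.coeff (j + 1) * (j + 1) + δ (p.coeff j) := by
  rw [DP, Polynomial.coeff_add, coeff_derivative, Polynomial.coeff_sum]
  congr 1
  rw [Polynomial.sum_def]
  simp only [coeff_monomial]
  rcases em (j ∈ p.support) with h | h
  · rw [Finset.sum_eq_single j]
    · simp
    · intro b _ hb; simp [hb]
    · intro hj; exact absurd h hj
  · rw [Finset.sum_eq_zero, Polynomial.notMem_support_iff.mp h, map_zero]
    intro b hb
    have hbj : b ≠ j := fun e => h (e ▸ hb)
    simp [hbj]

lemma DP_image {F : Type*} [Field F] (δ : Derivation ℤ F F)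
    (d : Derivation ℤ (RatFunc F) (RatFunc F))
    (hext : ∀ a : F, d (algebraMap F (RatFunc F) a) = algebraMap F (RatFunc F) (δ a))
    (ht : d RatFunc.X = 1) (p : F[X]) :
    d (algebraMap F[X] (RatFunc F) p) = algebraMap F[X] (RatFunc F) (DP δ p) := by
  induction p using Polynomial.induction_on' with
  | add p q hp hq =>
    have : DP δ (p + q) = DP δ p + DP δ q := by
      ext j
      simp only [DP_coeff, coeff_add, map_add]
      ring
    rw [map_add, map_add, hp, hq, this, map_add]
  | monomial i a =>
    have hm : (monomial i a : F[X]) = Polynomial.C a * Polynomial.X ^ i := by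
      rw [← Polynomial.smul_X_eq_monomial, smul_eq_C_mul]
    have hDP : DP δ (monomial i a) = monomial (i - 1) ((i : F) * a) + monomial i (δ a) := by
      ext j
      simp only [DP_coeff, coeff_add, coeff_monomial]
      rcases em (i = j + 1) with h | h
      · have h1 : i - 1 = j := by omega
        have h2 : i ≠ j := by omega
        simp only [if_pos h, if_pos h1, if_neg h2]
        rw [h, map_zero]
        push_cast
        ring
      · have hz : (if i - 1 = j then (i : F) * a else 0) = 0 := by
          rcases em (i - 1 = j) with h1 | h1
          · have hi0 : i = 0 := by omega
            simp [hi0]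
          · simp [h1]
        rcases em (i = j) with h2 | h2
        · subst h2
          have hz0 : δ (if i = i then a else 0) = δ a := by simp
          simp [h, hz]
        · simp [h, h2, hz]
    rw [hDP, hm]
    rw [map_mul, map_pow, RatFunc.algebraMap_C, RatFunc.algebraMap_X,
      ← RatFunc.algebraMap_eq_C]
    rw [Derivation.leibniz, Derivation.leibniz_pow, ht, hext]
    have e1 : ∀ b : F, (algebraMap F[X] (RatFunc F)) (monomial i b)
        = algebraMap F (RatFunc F) b * RatFunc.X ^ i := by
      intro b
      rw [← Polynomial.smul_X_eq_monomial, smul_eq_C_mul, map_mul, map_pow,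
        RatFunc.algebraMap_C, RatFunc.algebraMap_X, RatFunc.algebraMap_eq_C]
    have e2 : (algebraMap F[X] (RatFunc F)) (monomial (i - 1) ((i : F) * a))
        = algebraMap F (RatFunc F) ((i : F) * a) * RatFunc.X ^ (i - 1) := by
      rw [← Polynomial.smul_X_eq_monomial, smul_eq_C_mul, map_mul, map_pow,
        RatFunc.algebraMap_C, RatFunc.algebraMap_X, RatFunc.algebraMap_eq_C]
    rw [map_add, e2, e1, map_mul, map_natCast, nsmul_eq_mul]
    simp only [smul_eq_mul]
    ring

/-- If in a differential field `(F, δ)` of characteristic 0 the equation `δx = n·x`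
(`n` a positive integer) has only the trivial solution, then the same holds in the
rational function field `F(t)` with the derivation extending `δ` and sending `t` to 1. -/
theorem no_nontrivial_solution_ratFunc {F : Type*} [Field F] [CharZero F]
    (δ : Derivation ℤ F F)
    (hF : ∀ (x : F) (n : ℕ), 0 < n → δ x = n • x → x = 0)
    (d : Derivation ℤ (RatFunc F) (RatFunc F))
    (hext : ∀ a : F, d (algebraMap F (RatFunc F) a) = algebraMap F (RatFunc F) (δ a))
    (ht : d RatFunc.X = 1) :
    ∀ (y : RatFunc F) (n : ℕ), 0 < n → d y = n • y → y = 0 := by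
  intro y n hn hdy
  set p := y.num with hp
  set q := y.denom with hq
  have hq0 : q ≠ 0 := y.denom_ne_zero
  have hinj : Function.Injective (algebraMap F[X] (RatFunc F)) :=
    IsFractionRing.injective F[X] (RatFunc F)
  have hqalg : algebraMap F[X] (RatFunc F) q ≠ 0 := by
    intro h
    exact hq0 (hinj (by rw [h, map_zero]))
  have hy : y * algebraMap F[X] (RatFunc F) q = algebraMap F[X] (RatFunc F) p := by
    conv_lhs => rw [← RatFunc.num_div_denom y]
    exact div_mul_cancel₀ _ hqalg
  have h1 := congrArg d hy
  rw [Derivation.leibniz, hdy, DP_image δ d hext ht, DP_image δ d hext ht] at h1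
  simp only [smul_eq_mul] at h1
  have h2 : y * algebraMap F[X] (RatFunc F) (DP δ q)
      = algebraMap F[X] (RatFunc F) (DP δ p - n • p) := by
    rw [map_sub, map_nsmul, ← h1]
    have e : algebraMap F[X] (RatFunc F) q * (n • y) = n • algebraMap F[X] (RatFunc F) p := by
      rw [mul_smul_comm, mul_comm, hy]
    rw [e, add_sub_cancel_right]
  have hkey : p * DP δ q = q * (DP δ p - n • p) := by
    apply hinj
    rw [map_mul, map_mul, ← hy]
    rw [mul_comm y _, mul_assoc, h2]
  have hdvd : q ∣ DP δ q := by
    refine (y.isCoprime_num_denom).symm.dvd_of_dvd_mul_left ?_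
    exact ⟨_, hkey⟩
  have hdeg : (DP δ q).degree < q.degree := by
    have hmonic : q.Monic := y.monic_denom
    rw [Polynomial.degree_eq_natDegree hq0]
    rw [Polynomial.degree_lt_iff_coeff_zero]
    intro m hm
    have hm' : q.natDegree ≤ m := by exact_mod_cast hm
    rw [DP_coeff]
    rcases eq_or_lt_of_le hm' with h | h
    · rw [Polynomial.coeff_eq_zero_of_natDegree_lt (by omega), ← h,
        Polynomial.Monic.coeff_natDegree hmonic, Derivation.map_one_eq_zero]
      ring
    · rw [Polynomial.coeff_eq_zero_of_natDegree_lt (by omega),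
        Polynomial.coeff_eq_zero_of_natDegree_lt h, map_zero]
      ring
  have hDq : DP δ q = 0 := Polynomial.eq_zero_of_dvd_of_degree_lt hdvd hdeg
  have hDp : DP δ p = n • p := by
    have h3 : q * (DP δ p - n • p) = q * 0 := by
      rw [← hkey, hDq, mul_zero, mul_zero]
    have := mul_left_cancel₀ hq0 h3
    rwa [sub_eq_zero] at this
  have hp0 : p = 0 := by
    by_contra hp0
    have hc := congrArg (fun r => Polynomial.coeff r p.natDegree) hDp
    simp only [DP_coeff, Polynomial.coeff_smul] at hc
    rw [Polynomial.coeff_eq_zero_of_natDegree_lt (by omega)] at hc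
    have hδ : δ (p.coeff p.natDegree) = n • (p.coeff p.natDegree) := by
      rw [← hc]; ring
    have := hF _ n hn hδ
    exact (Polynomial.leadingCoeff_ne_zero.mpr hp0) this
  rw [← RatFunc.num_div_denom y, ← hp, ← hq, hp0, map_zero, zero_div]
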